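/- Let X be a Banach space and (X_k) closed subspaces forming a representing system (every x ∈ X can be written as a convergent series x = Σ x_k with x_k ∈ X_k). Then there exists M > 0 such that every x ∈ X admits a representation x = Σ x_k with x_k ∈ X_k and sup_{k≥1} ‖x_1 + ... + x_k‖ ≤ M‖x‖. -/

import Mathlib

set_option linter.unusedSectionVars false

open Filter Finset

/-- `S = (X_k)` is a representing system of subspaces: every `x` is the sum of a
convergent series with `k`-th term in `X_k`. -/
def IsRSS {E : Type*} [NormedAddCommGroup E] [NormedSpace ℝ E]
    (X : ℕ → Submodule ℝ E) : Prop :=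
  ∀ x : E, ∃ f : ℕ → E, (∀ k, f k ∈ X k) ∧
    Tendsto (fun n => ∑ k ∈ Finset.range n, f k) atTop (nhds x)

section Aux

variable {E : Type*} [NormedAddCommGroup E] [NormedSpace ℝ E]

/-- The submodule of `ℓ∞(ℕ, E)` consisting of convergent sequences `g` with `g 0 ∈ X 0`
and `g (n+1) - g n ∈ X (n+1)`. -/
noncomputable def rssD (X : ℕ → Submodule ℝ E) : Submodule ℝ (lp (fun _ : ℕ => E) ⊤) where
  carrier := {g | (∃ l, Tendsto (fun n => g n) atTop (nhds l)) ∧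
    g 0 ∈ X 0 ∧ ∀ n, g (n + 1) - g n ∈ X (n + 1)}
  add_mem' := by
    rintro a b ⟨⟨la, ha⟩, ha0, had⟩ ⟨⟨lb, hb⟩, hb0, hbd⟩
    refine ⟨⟨la + lb, ?_⟩, ?_, fun n => ?_⟩
    · simpa [lp.coeFn_add, Pi.add_apply] using ha.add hb
    · simpa [lp.coeFn_add, Pi.add_apply] using (X 0).add_mem ha0 hb0
    · have : (a + b) (n + 1) - (a + b) n = (a (n+1) - a n) + (b (n+1) - b n) := by
        simp [lp.coeFn_add, Pi.add_apply]; abel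
      rw [this]
      exact (X (n+1)).add_mem (had n) (hbd n)
  zero_mem' := by
    refine ⟨⟨0, ?_⟩, ?_, fun n => ?_⟩ <;> simp [lp.coeFn_zero, Pi.zero_apply]
  smul_mem' := by
    rintro c a ⟨⟨la, ha⟩, ha0, had⟩
    refine ⟨⟨c • la, ?_⟩, ?_, fun n => ?_⟩
    · simpa [lp.coeFn_smul, Pi.smul_apply] using ha.const_smul c
    · simpa [lp.coeFn_smul, Pi.smul_apply] using (X 0).smul_mem c ha0
    · have : (c • a) (n + 1) - (c • a) n = c • (a (n+1) - a n) := by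
        simp [lp.coeFn_smul, Pi.smul_apply, smul_sub]
      rw [this]
      exact (X (n+1)).smul_mem c (had n)

variable [CompleteSpace E]

set_option synthInstance.maxHeartbeats 1000000 in
theorem rssD_isClosed (X : ℕ → Submodule ℝ E) (hX : ∀ k, IsClosed (X k : Set E)) :
    IsClosed ((rssD X : Set (lp (fun _ : ℕ => E) ⊤))) := by
  apply IsSeqClosed.isClosed
  intro gj g hmem hgj
  -- pointwise convergence
  have hdist : Tendsto (fun j => dist (gj j) g) atTop (nhds 0) :=
    tendsto_iff_dist_tendsto_zero.mp hgj
  have hpt : ∀ n : ℕ, Tendsto (fun j => gj j n) atTop (nhds (g n)) := by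
    intro n
    rw [tendsto_iff_dist_tendsto_zero]
    refine squeeze_zero (fun j => dist_nonneg) (fun j => ?_) hdist
    have := lp.norm_apply_le_norm (ENNReal.top_ne_zero) (gj j - g) n
    simpa [lp.coeFn_sub, Pi.sub_apply, dist_eq_norm] using this
  refine ⟨?_, ?_, fun n => ?_⟩
  · -- g is Cauchy hence convergent
    have hcau : CauchySeq (fun n => g n) := by
      rw [Metric.cauchySeq_iff]
      intro ε hε
      obtain ⟨j, hj⟩ : ∃ j, dist (gj j) g < ε / 3 := by
        have := (hdist.eventually (gt_mem_nhds (by linarith : (0:ℝ) < ε/3))).exists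
        simpa using this
      have hcj : CauchySeq (fun n => gj j n) := (hmem j).1.choose_spec.cauchySeq
      rw [Metric.cauchySeq_iff] at hcj
      obtain ⟨N, hN⟩ := hcj (ε / 3) (by linarith)
      refine ⟨N, fun m hm n hn => ?_⟩
      have h1 : dist (g m) (gj j m) ≤ ε / 3 := by
        have := lp.norm_apply_le_norm (ENNReal.top_ne_zero) (gj j - g) m
        rw [dist_comm]
        calc dist (gj j m) (g m) = ‖(gj j - g) m‖ := by
              simp [lp.coeFn_sub, Pi.sub_apply, dist_eq_norm]
          _ ≤ ‖gj j - g‖ := this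
          _ = dist (gj j) g := by rw [dist_eq_norm]
          _ ≤ ε / 3 := le_of_lt hj
      have h3 : dist (gj j n) (g n) ≤ ε / 3 := by
        have := lp.norm_apply_le_norm (ENNReal.top_ne_zero) (gj j - g) n
        calc dist (gj j n) (g n) = ‖(gj j - g) n‖ := by
              simp [lp.coeFn_sub, Pi.sub_apply, dist_eq_norm]
          _ ≤ ‖gj j - g‖ := this
          _ = dist (gj j) g := by rw [dist_eq_norm]
          _ ≤ ε / 3 := le_of_lt hj
      calc dist (g m) (g n) ≤ dist (g m) (gj j m) + dist (gj j m) (gj j n)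
              + dist (gj j n) (g n) := dist_triangle4 _ _ _ _
        _ < ε := by linarith [hN m hm n hn]
    exact cauchySeq_tendsto_of_complete hcau
  · exact (hX 0).mem_of_tendsto (hpt 0) (Eventually.of_forall fun j => (hmem j).2.1)
  · exact (hX (n+1)).mem_of_tendsto ((hpt (n+1)).sub (hpt n))
      (Eventually.of_forall fun j => (hmem j).2.2 n)

/-- The "limit" linear map from `rssD X` to `E`. -/
noncomputable def rssT (X : ℕ → Submodule ℝ E) : rssD X →ₗ[ℝ] E where
  toFun g := limUnder atTop (fun n => (g : lp (fun _ : ℕ => E) ⊤) n)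
  map_add' a b := by
    obtain ⟨la, ha⟩ := a.2.1
    obtain ⟨lb, hb⟩ := b.2.1
    have hab : Tendsto (fun n => ((a + b : rssD X) : lp (fun _ : ℕ => E) ⊤) n)
        atTop (nhds (la + lb)) := by
      simpa [lp.coeFn_add, Pi.add_apply] using ha.add hb
    show limUnder atTop (fun n => ((a + b : rssD X) : lp (fun _ : ℕ => E) ⊤) n)
        = limUnder atTop (fun n => (a : lp (fun _ : ℕ => E) ⊤) n)
          + limUnder atTop (fun n => (b : lp (fun _ : ℕ => E) ⊤) n)
    rw [hab.limUnder_eq, ha.limUnder_eq, hb.limUnder_eq]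
  map_smul' c a := by
    obtain ⟨la, ha⟩ := a.2.1
    have hca : Tendsto (fun n => ((c • a : rssD X) : lp (fun _ : ℕ => E) ⊤) n)
        atTop (nhds (c • la)) := by
      simpa [lp.coeFn_smul, Pi.smul_apply] using ha.const_smul c
    show limUnder atTop (fun n => ((c • a : rssD X) : lp (fun _ : ℕ => E) ⊤) n)
        = (RingHom.id ℝ) c • limUnder atTop (fun n => (a : lp (fun _ : ℕ => E) ⊤) n)
    rw [hca.limUnder_eq, ha.limUnder_eq]
    rfl

theorem rssT_tendsto (X : ℕ → Submodule ℝ E) (g : rssD X) :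
    Tendsto (fun n => (g : lp (fun _ : ℕ => E) ⊤) n) atTop (nhds (rssT X g)) := by
  obtain ⟨l, hl⟩ := g.2.1
  have : rssT X g = l := hl.limUnder_eq
  rw [this]; exact hl

theorem rssT_norm_le (X : ℕ → Submodule ℝ E) (g : rssD X) : ‖rssT X g‖ ≤ 1 * ‖g‖ := by
  rw [one_mul]
  have h := (rssT_tendsto X g).norm
  refine le_of_tendsto' h fun n => ?_
  exact lp.norm_apply_le_norm ENNReal.top_ne_zero (g : lp (fun _ : ℕ => E) ⊤) n

end Aux

/-- If `(X_k)` is a representing system of subspaces of a Banach space `X`, then there is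
`M > 0` such that every `x` has a representation whose partial sums are all bounded by
`M‖x‖`. -/
theorem rss_bounded_representation {E : Type*} [NormedAddCommGroup E] [NormedSpace ℝ E]
    [CompleteSpace E] (X : ℕ → Submodule ℝ E) (hX : ∀ k, IsClosed (X k : Set E))
    (hS : IsRSS X) :
    ∃ M : ℝ, 0 < M ∧ ∀ x : E, ∃ f : ℕ → E, (∀ k, f k ∈ X k) ∧
      Tendsto (fun n => ∑ k ∈ Finset.range n, f k) atTop (nhds x) ∧
      ∀ n : ℕ, ‖∑ k ∈ Finset.range (n + 1), f k‖ ≤ M * ‖x‖ := by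
  haveI : Fact ((1 : ENNReal) ≤ ⊤) := ⟨le_top⟩
  haveI : CompleteSpace (rssD X) := (rssD_isClosed X hX).completeSpace_coe
  set T : rssD X →L[ℝ] E := (rssT X).mkContinuous 1 (rssT_norm_le X) with hT
  have hsurj : Function.Surjective T := by
    intro x
    obtain ⟨f, hf, hftend⟩ := hS x
    set F : ℕ → E := fun n => ∑ k ∈ Finset.range (n + 1), f k with hF
    have hFtend : Tendsto F atTop (nhds x) := by
      have := hftend.comp (tendsto_add_atTop_nat 1)
      simpa [hF, Function.comp_def] using this
    have hmem : Memℓp F ⊤ := memℓp_infty (hFtend.norm.bddAbove_range)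
    set G : lp (fun _ : ℕ => E) ⊤ := ⟨F, hmem⟩ with hG
    have hGcoe : ∀ n, G n = F n := fun n => rfl
    have hGmem : G ∈ rssD X := by
      refine ⟨⟨x, ?_⟩, ?_, fun n => ?_⟩
      · simpa [hGcoe] using hFtend
      · simpa [hGcoe, hF, Finset.sum_range_one] using hf 0
      · have : G (n + 1) - G n = f (n + 1) := by
          simp only [hGcoe, hF]
          exact Finset.sum_range_succ_sub_sum f
        rw [this]; exact hf (n + 1)
    refine ⟨⟨G, hGmem⟩, ?_⟩
    have : Tendsto (fun n => ((⟨G, hGmem⟩ : rssD X) : lp (fun _ : ℕ => E) ⊤) n)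
        atTop (nhds x) := by simpa [hGcoe] using hFtend
    exact this.limUnder_eq
  obtain ⟨C, hC, hCx⟩ := T.exists_preimage_norm_le hsurj
  refine ⟨C, hC, fun x => ?_⟩
  obtain ⟨g, hgx, hgnorm⟩ := hCx x
  set G : lp (fun _ : ℕ => E) ⊤ := (g : lp (fun _ : ℕ => E) ⊤) with hG
  set f : ℕ → E := fun k => Nat.rec (G 0) (fun k _ => G (k + 1) - G k) k with hf
  have hps : ∀ n : ℕ, ∑ k ∈ Finset.range (n + 1), f k = G n := by
    intro n
    induction n with
    | zero => simp [hf]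
    | succ n ih =>
        rw [Finset.sum_range_succ, ih]
        show G n + (G (n + 1) - G n) = G (n + 1)
        abel
  have hGtend : Tendsto (fun n => G n) atTop (nhds x) := by
    have := rssT_tendsto X g
    rw [show rssT X g = x from hgx] at this
    exact this
  refine ⟨f, fun k => ?_, ?_, fun n => ?_⟩
  · cases k with
    | zero => exact g.2.2.1
    | succ k => exact g.2.2.2 k
  · rw [← tendsto_add_atTop_iff_nat 1]
    have : (fun n => ∑ k ∈ Finset.range (n + 1), f k) = fun n => G n :=
      funext hps
    rw [this]
    exact hGtend
  · rw [hps n]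
    calc ‖G n‖ ≤ ‖G‖ := lp.norm_apply_le_norm ENNReal.top_ne_zero G n
      _ = ‖g‖ := rfl
      _ ≤ C * ‖x‖ := hgnorm
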